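/- Let G be a group acting on a scheme X and let χ: G → Γ(X, 𝒪_X^×) satisfy the 1-cocycle condition χ(gh) = h^♯(χ(g))·χ(h). Let π: Y → X be the degree m cyclic covering associated with a G-linearized line bundle ℒ and a section s ∈ Γ(X, ℒ^⊗(-m)) with Φ_g^⊗(-m)(g^*s) = χ(g)^{-m}·s for all g ∈ G. Then there is a G-action on Y making π G-equivariant. -/

import Mathlib

open Polynomial


/-- Lifting a group action along a cyclic covering (affine model, trivialized line bundle):
`G` acts on `X = Spec A` on the left, i.e. it acts on `A` on the right by ring
automorphisms `σ g = g^♯` (so `σ(gh) = σ(h) ∘ σ(g)` as pullbacks).  The `G`-linearization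
of `ℒ` is given by a 1-cocycle `u : G → A^×` and `χ : G → A^×` is a 1-cocycle
(`χ(gh) = h^♯(χ(g))·χ(h)`).  The section `s ∈ Γ(X, ℒ^{⊗(-m)})` satisfies
`Φ_g^{⊗(-m)}(g^* s) = χ(g)^{-m}·s`, i.e. `χ(g)^m · g^♯(s) = u(g)^m · s`.
Then the degree-`m` cyclic covering `Y = Spec A[t]/(t^m - s)` carries a `G`-action
making `π : Y → X` `G`-equivariant. -/
theorem stmt9 (A : Type*) [CommRing A] (G : Type*) [Group G]
    (σ : G → RingAut A) (hσ : ∀ g h : G, ∀ a : A, σ (g * h) a = σ h (σ g a))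
    (m : ℕ) (hm : 0 < m)
    (u χ : G → Aˣ)
    (hu : ∀ g h : G, (u (g * h) : A) = σ h (u g) * (u h : A))
    (hχ : ∀ g h : G, (χ (g * h) : A) = σ h (χ g) * (χ h : A))
    (s : A)
    (hs : ∀ g : G, (χ g : A)^m * σ g s = (u g : A)^m * s) :
    ∃ τ : G → RingAut (AdjoinRoot (Polynomial.X ^ m - Polynomial.C s)),
      (∀ g h : G, ∀ x, τ (g * h) x = τ h (τ g x)) ∧
      (∀ g : G, ∀ a : A,
        τ g (algebraMap A (AdjoinRoot (Polynomial.X ^ m - Polynomial.C s)) a)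
          = algebraMap A (AdjoinRoot (Polynomial.X ^ m - Polynomial.C s)) (σ g a)) := by
  classical
  set p : A[X] := X ^ m - C s with hp
  have hRtriv : True := trivial
  -- basic facts about the unit element
  have hσ1 : ∀ a : A, σ 1 a = a := by
    intro a
    have h := hσ 1 1 a
    rw [one_mul] at h
    exact (σ 1).injective h.symm
  have hu1 : (u 1 : A) = 1 := by
    have h := hu 1 1
    rw [one_mul, hσ1] at h
    exact ((u 1).isUnit.mul_left_cancel (a := (u 1 : A)) (by rw [mul_one]; exact h)).symm
  have hχ1 : (χ 1 : A) = 1 := by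
    have h := hχ 1 1
    rw [one_mul, hσ1] at h
    exact ((χ 1).isUnit.mul_left_cancel (a := (χ 1 : A)) (by rw [mul_one]; exact h)).symm
  -- the twisting cocycle
  set w : G → Aˣ := fun g => u g * (χ g)⁻¹ with hwdef
  have hw1 : (w 1 : A) = 1 := by
    simp only [hwdef, Units.val_mul]
    rw [hu1, one_mul]
    have hχu : χ 1 = 1 := Units.ext (by simpa using hχ1)
    rw [hχu, inv_one, Units.val_one]
  have hwcoc : ∀ g h : G, (w (g * h) : A) = σ h (w g) * (w h : A) := by
    intro g h
    have hinv : (((χ (g * h))⁻¹ : Aˣ) : A) * ((χ (g * h) : Aˣ) : A) = 1 := Units.inv_mul _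
    -- compute the inverse of χ (g*h) explicitly
    have hinv2 : (((χ (g * h))⁻¹ : Aˣ) : A) = σ h (((χ g)⁻¹ : Aˣ) : A) * (((χ h)⁻¹ : Aˣ) : A) := by
      have key : (σ h (((χ g)⁻¹ : Aˣ) : A) * (((χ h)⁻¹ : Aˣ) : A)) * ((χ (g * h) : Aˣ) : A) = 1 := by
        rw [hχ g h]
        have h1 : σ h (((χ g)⁻¹ : Aˣ) : A) * σ h ((χ g : Aˣ) : A) = 1 := by
          rw [← map_mul, Units.inv_mul, map_one]
        calc σ h (((χ g)⁻¹ : Aˣ) : A) * (((χ h)⁻¹ : Aˣ) : A) * (σ h ((χ g : Aˣ) : A) * ((χ h : Aˣ) : A))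
            = (σ h (((χ g)⁻¹ : Aˣ) : A) * σ h ((χ g : Aˣ) : A)) * ((((χ h)⁻¹ : Aˣ) : A) * ((χ h : Aˣ) : A)) := by ring
          _ = 1 := by rw [h1, Units.inv_mul, mul_one]
      calc (((χ (g * h))⁻¹ : Aˣ) : A)
          = (σ h (((χ g)⁻¹ : Aˣ) : A) * (((χ h)⁻¹ : Aˣ) : A) * ((χ (g * h) : Aˣ) : A)) * (((χ (g * h))⁻¹ : Aˣ) : A) := by
            rw [key, one_mul]
        _ = σ h (((χ g)⁻¹ : Aˣ) : A) * (((χ h)⁻¹ : Aˣ) : A) * (((χ (g * h) : Aˣ) : A) * (((χ (g * h))⁻¹ : Aˣ) : A)) := by ring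
        _ = σ h (((χ g)⁻¹ : Aˣ) : A) * (((χ h)⁻¹ : Aˣ) : A) := by rw [Units.mul_inv, mul_one]
    simp only [hwdef, Units.val_mul]
    rw [hu g h, hinv2, map_mul]
    ring
  have hws : ∀ g : G, (w g : A) ^ m * s = σ g s := by
    intro g
    have h := hs g
    calc (w g : A) ^ m * s
        = (((χ g)⁻¹ : Aˣ) : A) ^ m * ((u g : A) ^ m * s) := by
          simp only [hwdef, Units.val_mul, mul_pow]; ring
      _ = (((χ g)⁻¹ : Aˣ) : A) ^ m * ((χ g : A) ^ m * σ g s) := by rw [← h]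
      _ = ((((χ g)⁻¹ : Aˣ) : A) * (χ g : A)) ^ m * σ g s := by rw [mul_pow]; ring
      _ = σ g s := by rw [Units.inv_mul, one_pow, one_mul]
  -- the root satisfies
  have hrootm : (AdjoinRoot.root p) ^ m = algebraMap A (AdjoinRoot p) s := by
    have h0 : AdjoinRoot.mk p p = 0 := AdjoinRoot.mk_self
    have h1 : (AdjoinRoot.root p) ^ m - algebraMap A (AdjoinRoot p) s = 0 := by
      simpa [hp, map_sub, map_pow, AdjoinRoot.algebraMap_eq] using h0
    exact sub_eq_zero.mp h1
  -- the lifted ring homomorphisms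
  have hroot : ∀ g : G, p.eval₂ ((algebraMap A (AdjoinRoot p)).comp (σ g : A →+* A))
      (algebraMap A (AdjoinRoot p) (w g) * AdjoinRoot.root p) = 0 := by
    intro g
    simp only [hp, eval₂_sub, eval₂_pow, eval₂_X, eval₂_C, RingHom.comp_apply,
      RingHom.coe_coe]
    rw [mul_pow, hrootm, ← map_pow, ← map_mul, hws g, sub_self]
  set φ : G → (AdjoinRoot p →+* AdjoinRoot p) := fun g =>
    AdjoinRoot.lift ((algebraMap A (AdjoinRoot p)).comp (σ g : A →+* A))
      (algebraMap A (AdjoinRoot p) (w g) * AdjoinRoot.root p) (hroot g) with hφdef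
  have hφ_of : ∀ g : G, ∀ a : A, φ g (algebraMap A (AdjoinRoot p) a) = algebraMap A (AdjoinRoot p) (σ g a) := by
    intro g a
    rw [AdjoinRoot.algebraMap_eq]
    simp only [hφdef, AdjoinRoot.lift_of, RingHom.comp_apply, RingHom.coe_coe]
    rw [AdjoinRoot.algebraMap_eq]
  have hφ_root : ∀ g : G, φ g (AdjoinRoot.root p) = algebraMap A (AdjoinRoot p) (w g) * AdjoinRoot.root p := by
    intro g
    simp only [hφdef, AdjoinRoot.lift_root]
  -- composition law as ring homs
  have hcomp : ∀ g h : G, φ (g * h) = (φ h).comp (φ g) := by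
    intro g h
    have hext : (φ (g * h)).comp (AdjoinRoot.mk p) = ((φ h).comp (φ g)).comp (AdjoinRoot.mk p) := by
      apply Polynomial.ringHom_ext
      · intro a
        have h1 : (AdjoinRoot.mk p) (C a) = algebraMap A (AdjoinRoot p) a := by
          rw [AdjoinRoot.algebraMap_eq]; rfl
        simp only [RingHom.comp_apply, h1, hφ_of, hσ]
      · have h2 : (AdjoinRoot.mk p) X = AdjoinRoot.root p := rfl
        simp only [RingHom.comp_apply, h2, hφ_root, map_mul, hφ_of]
        rw [hwcoc g h, map_mul]
        ring
    refine RingHom.ext fun x => ?_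
    obtain ⟨q, rfl⟩ := AdjoinRoot.mk_surjective x
    exact congrFun (congrArg DFunLike.coe hext) q
  have hφ1 : φ 1 = RingHom.id (AdjoinRoot p) := by
    have hext : (φ 1).comp (AdjoinRoot.mk p) = (RingHom.id (AdjoinRoot p)).comp (AdjoinRoot.mk p) := by
      apply Polynomial.ringHom_ext
      · intro a
        have h1 : (AdjoinRoot.mk p) (C a) = algebraMap A (AdjoinRoot p) a := by
          rw [AdjoinRoot.algebraMap_eq]; rfl
        simp only [RingHom.comp_apply, h1, hφ_of, hσ1, RingHom.id_apply]
      · have h2 : (AdjoinRoot.mk p) X = AdjoinRoot.root p := rfl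
        simp only [RingHom.comp_apply, h2, hφ_root, hw1, map_one, one_mul, RingHom.id_apply]
    refine RingHom.ext fun x => ?_
    obtain ⟨q, rfl⟩ := AdjoinRoot.mk_surjective x
    exact congrFun (congrArg DFunLike.coe hext) q
  -- build the automorphisms
  refine ⟨fun g => RingEquiv.ofRingHom (φ g) (φ g⁻¹) ?_ ?_, ?_, ?_⟩
  · rw [← hcomp, inv_mul_cancel, hφ1]
  · rw [← hcomp, mul_inv_cancel, hφ1]
  · intro g h x
    have := congrFun (congrArg DFunLike.coe (hcomp g h)) x
    simpa using this
  · intro g a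
    simpa using hφ_of g a
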